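/- For b > 1, as K → ∞ (with β = b^{1/K}) one has: (i) (1/(2K))·Σ_{k=1}^{K-2} (β^{-k/2} + β·β^{k/2}) → (b-1)/(√b·log b); (ii) (1+2β)/K − β(1 + 1/log b) → −(1 + 1/log b); and (iii) (1/(2β^{(K-1)/2}))·(b/log b − (b−β)/(K(β−1))) → 1/(2√b·log b). Consequently β·(f(β) + t_0 + 2Σ_{k=1}^{K-1} t_k) → (√b + 2b − 1)/(√b·log b), where f(β) → 1 + 2/log b. -/

import Mathlib

open Real Filter Finset

/-- `β = b^{1/K}`. -/
noncomputable def beta12 (b : ℝ) (K : ℕ) : ℝ := b ^ ((1 : ℝ) / K)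

/-- The function `f(α) = (1+α)/2 + 2/log b + ((α-1)/(2 log b))(1 - log α)`. -/
noncomputable def f12 (b α : ℝ) : ℝ :=
  (1 + α) / 2 + 2 / Real.log b + ((α - 1) / (2 * Real.log b)) * (1 - Real.log α)

/-- The coefficients `t_k` for `1 ≤ k ≤ K-1`: `t_k = (1+β^{1+k})/(2K·β^{k/2})` for
`k ≤ K-2` and `t_{K-1} = (1/(2β^{(K-1)/2}))·(b/log b − (b−β)/(K(β−1)))`. -/
noncomputable def t12 (b : ℝ) (K k : ℕ) : ℝ :=
  if k < K - 1 then
    (1 + beta12 b K ^ (1 + (k : ℝ))) / (2 * K * beta12 b K ^ ((k : ℝ) / 2))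
  else
    (1 / (2 * beta12 b K ^ (((K : ℝ) - 1) / 2)))
      * (b / Real.log b - (b - beta12 b K) / (K * (beta12 b K - 1)))

lemma aux_rpow_exponent {b : ℝ} (hb : 0 < b) {e : ℕ → ℝ} {L : ℝ}
    (he : Tendsto e atTop (nhds L)) :
    Tendsto (fun K : ℕ => b ^ e K) atTop (nhds (b ^ L)) :=
  (Real.continuousAt_const_rpow (b := L) hb.ne').tendsto.comp he

lemma aux_K_mul {b : ℝ} (hb : 1 < b) {c : ℝ} (hc : c ≠ 0) :
    Tendsto (fun K : ℕ => (K : ℝ) * (b ^ (c / (K:ℝ)) - 1)) atTop (nhds (c * Real.log b)) := by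
  have hb0 : (0:ℝ) < b := lt_trans one_pos hb
  have hlb : 0 < Real.log b := Real.log_pos hb
  have hx : Tendsto (fun K : ℕ => Real.log b * (c / (K:ℝ))) atTop (nhds 0) := by
    simpa [mul_div_assoc] using tendsto_const_div_atTop_nhds_zero_nat (Real.log b * c)
  have hslope : Tendsto (slope Real.exp 0) (nhdsWithin 0 {(0:ℝ)}ᶜ) (nhds 1) :=
    hasDerivAt_iff_tendsto_slope.mp (by simpa using Real.hasDerivAt_exp 0)
  have hxne : ∀ᶠ K : ℕ in atTop, Real.log b * (c / (K:ℝ)) ∈ ({(0:ℝ)}ᶜ : Set ℝ) := by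
    filter_upwards [eventually_ge_atTop 1] with K hK
    have hK0 : ((K:ℝ)) ≠ 0 := Nat.cast_ne_zero.2 (by omega)
    simpa using mul_ne_zero hlb.ne' (div_ne_zero hc hK0)
  have hcomp : Tendsto (fun K : ℕ => slope Real.exp 0 (Real.log b * (c / (K:ℝ)))) atTop (nhds 1) :=
    hslope.comp (tendsto_nhdsWithin_iff.2 ⟨hx, hxne⟩)
  have h := (tendsto_const_nhds (x := c * Real.log b) (f := atTop (α := ℕ))).mul hcomp
  rw [mul_one] at h
  refine h.congr' ?_
  filter_upwards [eventually_ge_atTop 1] with K hK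
  have hK0 : ((K:ℝ)) ≠ 0 := Nat.cast_ne_zero.2 (by omega)
  have hxK : Real.log b * (c / (K:ℝ)) ≠ 0 := mul_ne_zero hlb.ne' (div_ne_zero hc hK0)
  rw [slope_def_field, Real.rpow_def_of_pos hb0, Real.exp_zero, sub_zero]
  field_simp

lemma beta_rpow {b : ℝ} (hb : 0 < b) (K : ℕ) (x : ℝ) :
    beta12 b K ^ x = b ^ (x / (K:ℝ)) := by
  rw [beta12, ← Real.rpow_mul hb.le]
  ring_nf

lemma beta_tendsto {b : ℝ} (hb : 0 < b) :
    Tendsto (fun K : ℕ => beta12 b K) atTop (nhds 1) := by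
  have := aux_rpow_exponent hb (e := fun K : ℕ => (1:ℝ)/K) (L := 0)
    (by exact tendsto_const_div_atTop_nhds_zero_nat 1)
  simpa [beta12, Real.rpow_zero] using this

lemma rpow_ne_one' {b : ℝ} (hb : 1 < b) {x : ℝ} (hx : x ≠ 0) : b ^ x ≠ 1 := by
  have hb0 : (0:ℝ) < b := lt_trans one_pos hb
  intro h
  have h2 := congrArg Real.log h
  rw [Real.log_rpow hb0, Real.log_one] at h2
  rcases mul_eq_zero.mp h2 with h' | h'
  · exact hx h'
  · exact (Real.log_pos hb).ne' h'

lemma aux_geom {b : ℝ} (hb : 1 < b) {c : ℝ} (hc : c ≠ 0) :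
    Tendsto (fun K : ℕ => (1 / (2 * (K:ℝ))) * ∑ k ∈ Finset.Icc 1 (K - 2), (b ^ (c / (K:ℝ))) ^ k)
      atTop (nhds ((b ^ c - 1) / (2 * (c * Real.log b)))) := by
  have hb0 : (0:ℝ) < b := lt_trans one_pos hb
  have hlb : 0 < Real.log b := Real.log_pos hb
  have hs1 : Tendsto (fun K : ℕ => b ^ (c / (K:ℝ))) atTop (nhds 1) := by
    have := aux_rpow_exponent hb0 (e := fun K : ℕ => c/(K:ℝ)) (L := 0)
      (tendsto_const_div_atTop_nhds_zero_nat c)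
    simpa using this
  have hexp : Tendsto (fun K : ℕ => (c/(K:ℝ)) * ((K - 2 : ℕ) : ℝ)) atTop (nhds c) := by
    have h2 : Tendsto (fun K : ℕ => c - 2*c/(K:ℝ)) atTop (nhds c) := by
      have := (tendsto_const_nhds (x := c) (f := atTop (α := ℕ))).sub
        (tendsto_const_div_atTop_nhds_zero_nat (2*c))
      simpa using this
    refine h2.congr' ?_
    filter_upwards [eventually_ge_atTop 2] with K hK
    have hK0 : ((K:ℝ)) ≠ 0 := Nat.cast_ne_zero.2 (by omega)
    rw [Nat.cast_sub hK]
    push_cast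
    field_simp
  have hpow : Tendsto (fun K : ℕ => (b ^ (c/(K:ℝ))) ^ (K - 2)) atTop (nhds (b ^ c)) := by
    have := aux_rpow_exponent hb0 hexp
    refine this.congr fun K => ?_
    rw [Real.rpow_mul hb0.le, Real.rpow_natCast]
  have hden : Tendsto (fun K : ℕ => 2 * ((K:ℝ) * (b ^ (c/(K:ℝ)) - 1))) atTop
      (nhds (2 * (c * Real.log b))) :=
    (aux_K_mul hb hc).const_mul 2
  have hne : 2 * (c * Real.log b) ≠ 0 := mul_ne_zero two_ne_zero (mul_ne_zero hc hlb.ne')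
  have hmain := Tendsto.div (hs1.mul (hpow.sub (tendsto_const_nhds (x := (1:ℝ))))) hden hne
  rw [one_mul] at hmain
  refine hmain.congr' ?_
  filter_upwards [eventually_ge_atTop 2] with K hK
  have hK0 : ((K:ℝ)) ≠ 0 := Nat.cast_ne_zero.2 (by omega)
  have hsne : b ^ (c/(K:ℝ)) ≠ 1 := rpow_ne_one' hb (div_ne_zero hc hK0)
  have hsum : ∑ k ∈ Finset.Icc 1 (K-2), (b ^ (c/(K:ℝ)))^k
      = (b ^ (c/(K:ℝ))) * (((b ^ (c/(K:ℝ)))^(K-2) - 1)/((b ^ (c/(K:ℝ))) - 1)) := by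
    rw [← Finset.Ico_add_one_right_eq_Icc, Finset.sum_Ico_eq_sum_range]
    simp only [Nat.add_sub_cancel, Nat.succ_sub_one, pow_add, pow_one]
    rw [← Finset.mul_sum, geom_sum_eq hsne]
  simp only [Pi.div_apply]
  rw [hsum]
  field_simp [sub_ne_zero.mpr hsne, hK0]



lemma beta_pow_nat {b : ℝ} (hb0 : 0 < b) (K k : ℕ) (c : ℝ) :
    beta12 b K ^ (c * (k:ℝ)) = (b ^ (c / (K:ℝ))) ^ k := by
  rw [beta_rpow hb0, ← Real.rpow_natCast (b ^ (c / (K:ℝ))) k, ← Real.rpow_mul hb0.le]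
  congr 1
  ring

lemma part1 {b : ℝ} (hb : 1 < b) :
    Tendsto (fun K : ℕ => (1 / (2 * (K : ℝ))) *
        ∑ k ∈ Finset.Icc 1 (K - 2),
          (beta12 b K ^ (-(k : ℝ) / 2) + beta12 b K * beta12 b K ^ ((k : ℝ) / 2)))
      atTop (nhds ((b - 1) / (Real.sqrt b * Real.log b))) := by
  have hb0 : (0:ℝ) < b := lt_trans one_pos hb
  have hlb : 0 < Real.log b := Real.log_pos hb
  have hfun : ∀ K : ℕ, (1 / (2 * (K : ℝ))) *
        ∑ k ∈ Finset.Icc 1 (K - 2),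
          (beta12 b K ^ (-(k : ℝ) / 2) + beta12 b K * beta12 b K ^ ((k : ℝ) / 2))
      = (1 / (2 * (K:ℝ))) * ∑ k ∈ Finset.Icc 1 (K - 2), (b ^ ((-(1:ℝ)/2) / (K:ℝ)))^k
        + beta12 b K * ((1 / (2 * (K:ℝ))) * ∑ k ∈ Finset.Icc 1 (K - 2), (b ^ (((1:ℝ)/2) / (K:ℝ)))^k) := by
    intro K
    have hpt : ∀ k ∈ Finset.Icc 1 (K-2),
        beta12 b K ^ (-(k : ℝ) / 2) + beta12 b K * beta12 b K ^ ((k : ℝ) / 2)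
        = (b ^ ((-(1:ℝ)/2) / (K:ℝ)))^k + beta12 b K * (b ^ (((1:ℝ)/2) / (K:ℝ)))^k := by
      intro k _
      rw [show -(k:ℝ)/2 = (-(1:ℝ)/2)*(k:ℝ) by ring, show (k:ℝ)/2 = ((1:ℝ)/2)*(k:ℝ) by ring,
        beta_pow_nat hb0, beta_pow_nat hb0]
    rw [Finset.sum_congr rfl hpt, Finset.sum_add_distrib, ← Finset.mul_sum]
    ring
  simp only [hfun]
  have h1 := aux_geom hb (c := -(1:ℝ)/2) (by norm_num)
  have h2 := aux_geom hb (c := (1:ℝ)/2) (by norm_num)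
  have hβ := beta_tendsto (b := b) hb0
  have hlim := h1.add (hβ.mul h2)
  have hval : (b ^ (-(1:ℝ)/2) - 1) / (2 * (-(1:ℝ)/2 * Real.log b))
      + 1 * ((b ^ ((1:ℝ)/2) - 1) / (2 * ((1:ℝ)/2 * Real.log b)))
      = (b - 1) / (Real.sqrt b * Real.log b) := ?_
  · rw [← hval]; exact hlim
  have hs : Real.sqrt b = b ^ ((1:ℝ)/2) := Real.sqrt_eq_rpow b
  have hneg : b ^ (-(1:ℝ)/2) = (b ^ ((1:ℝ)/2))⁻¹ := by
    rw [neg_div, Real.rpow_neg hb0.le]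
  have hs0 : (0:ℝ) < b ^ ((1:ℝ)/2) := Real.rpow_pos_of_pos hb0 _
  have hs2 : b ^ ((1:ℝ)/2) * b ^ ((1:ℝ)/2) = b := by
    rw [← Real.rpow_add hb0]; norm_num
  rw [hs, hneg, one_mul]
  field_simp
  ring_nf
  linear_combination hs2

lemma part2 {b : ℝ} (hb : 1 < b) :
    Tendsto (fun K : ℕ =>
        (1 + 2 * beta12 b K) / K - beta12 b K * (1 + 1 / Real.log b))
      atTop (nhds (-(1 + 1 / Real.log b))) := by
  have hb0 : (0:ℝ) < b := lt_trans one_pos hb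
  have hβ := beta_tendsto (b := b) hb0
  have h1 : Tendsto (fun K : ℕ => (1 + 2 * beta12 b K) / (K:ℝ)) atTop (nhds 0) := by
    have hnum : Tendsto (fun K : ℕ => 1 + 2 * beta12 b K) atTop (nhds (1 + 2 * 1)) :=
      (tendsto_const_nhds).add (hβ.const_mul 2)
    exact hnum.div_atTop tendsto_natCast_atTop_atTop
  have h2 : Tendsto (fun K : ℕ => beta12 b K * (1 + 1 / Real.log b)) atTop
      (nhds (1 * (1 + 1 / Real.log b))) := hβ.mul_const _
  have := h1.sub h2
  rw [one_mul, zero_sub] at this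
  exact this

lemma part3 {b : ℝ} (hb : 1 < b) :
    Tendsto (fun K : ℕ =>
        (1 / (2 * beta12 b K ^ (((K : ℝ) - 1) / 2)))
          * (b / Real.log b - (b - beta12 b K) / (K * (beta12 b K - 1))))
      atTop (nhds (1 / (2 * Real.sqrt b * Real.log b))) := by
  have hb0 : (0:ℝ) < b := lt_trans one_pos hb
  have hlb : 0 < Real.log b := Real.log_pos hb
  have hβ := beta_tendsto (b := b) hb0
  have hs0 : (0:ℝ) < Real.sqrt b := Real.sqrt_pos.2 hb0
  -- β^{(K-1)/2} → √b
  have hpow : Tendsto (fun K : ℕ => beta12 b K ^ (((K : ℝ) - 1) / 2)) atTop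
      (nhds (Real.sqrt b)) := by
    have hexp : Tendsto (fun K : ℕ => (((K:ℝ) - 1)/2) / (K:ℝ)) atTop (nhds ((1:ℝ)/2)) := by
      have h2 : Tendsto (fun K : ℕ => (1:ℝ)/2 - (1/2)/(K:ℝ)) atTop (nhds ((1:ℝ)/2)) := by
        have := (tendsto_const_nhds (x := (1:ℝ)/2) (f := atTop (α := ℕ))).sub
          (tendsto_const_div_atTop_nhds_zero_nat (1/2))
        simpa using this
      refine h2.congr' ?_
      filter_upwards [eventually_ge_atTop 1] with K hK
      have hK0 : ((K:ℝ)) ≠ 0 := Nat.cast_ne_zero.2 (by omega)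
      field_simp
    have := aux_rpow_exponent hb0 hexp
    rw [← Real.sqrt_eq_rpow] at this
    refine this.congr fun K => ?_
    rw [beta_rpow hb0]
  -- K(β−1) → log b
  have hden : Tendsto (fun K : ℕ => (K:ℝ) * (beta12 b K - 1)) atTop (nhds (Real.log b)) := by
    have := aux_K_mul hb (c := (1:ℝ)) one_ne_zero
    rw [one_mul] at this
    exact this.congr fun K => by rw [beta12]
  have hfrac : Tendsto (fun K : ℕ => (b - beta12 b K) / ((K:ℝ) * (beta12 b K - 1))) atTop
      (nhds ((b - 1) / Real.log b)) :=
    Tendsto.div ((tendsto_const_nhds).sub hβ) hden hlb.ne'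
  have hinv : Tendsto (fun K : ℕ => 1 / (2 * beta12 b K ^ (((K : ℝ) - 1) / 2))) atTop
      (nhds (1 / (2 * Real.sqrt b))) :=
    Tendsto.div tendsto_const_nhds (hpow.const_mul 2) (by positivity)
  have hlim := hinv.mul ((tendsto_const_nhds (x := b / Real.log b)).sub hfrac)
  have hval : 1 / (2 * Real.sqrt b) * (b / Real.log b - (b - 1) / Real.log b)
      = 1 / (2 * Real.sqrt b * Real.log b) := by
    field_simp
    ring
  rw [hval] at hlim
  exact hlim

lemma part4 {b : ℝ} (hb : 1 < b) :
    Tendsto (fun K : ℕ => f12 b (beta12 b K)) atTop (nhds (1 + 2 / Real.log b)) := by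
  have hb0 : (0:ℝ) < b := lt_trans one_pos hb
  have hβ := beta_tendsto (b := b) hb0
  have hcont : ContinuousAt (f12 b) 1 := by
    unfold f12
    have hlog : ContinuousAt Real.log 1 := Real.continuousAt_log one_ne_zero
    fun_prop (disch := norm_num)
  have := hcont.tendsto.comp hβ
  have hval : f12 b 1 = 1 + 2 / Real.log b := by
    unfold f12
    simp [Real.log_one]
  rw [hval] at this
  exact this

lemma t12_small {b : ℝ} (hb0 : 0 < b) {K k : ℕ} (hK : K ≠ 0) (hk : k < K - 1) :
    t12 b K k = (1/(2*(K:ℝ))) *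
      (beta12 b K ^ (-(k:ℝ)/2) + beta12 b K * beta12 b K ^ ((k:ℝ)/2)) := by
  rw [t12, if_pos hk]
  have hβ : 0 < beta12 b K := Real.rpow_pos_of_pos hb0 _
  have h1 : beta12 b K ^ (1+(k:ℝ)) = beta12 b K * beta12 b K ^ ((k:ℝ)) := by
    rw [Real.rpow_add hβ, Real.rpow_one]
  have h2 : beta12 b K ^ (-(k:ℝ)/2) = (beta12 b K ^ ((k:ℝ)/2))⁻¹ := by
    rw [neg_div, Real.rpow_neg hβ.le]
  have h3 : beta12 b K ^ ((k:ℝ)/2) * beta12 b K ^ ((k:ℝ)/2) = beta12 b K ^ ((k:ℝ)) := by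
    rw [← Real.rpow_add hβ]
    ring_nf
  have hβk : (0:ℝ) < beta12 b K ^ ((k:ℝ)/2) := Real.rpow_pos_of_pos hβ _
  have hKne : ((K:ℝ)) ≠ 0 := Nat.cast_ne_zero.2 hK
  have h4 : beta12 b K ^ ((k:ℝ)) = beta12 b K ^ k := Real.rpow_natCast _ k
  have h3' : (beta12 b K ^ ((k:ℝ)/2))^2 = beta12 b K ^ k := by rw [sq, h3, h4]
  rw [h1, h2]
  rw [div_eq_iff (by positivity), mul_comm]
  field_simp
  have h3'' : (beta12 b K ^ ((k:ℝ)/2))^2 = beta12 b K ^ ((k:ℝ)) := by rw [sq]; exact h3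
  linear_combination (-(beta12 b K)) * h3' + (beta12 b K) * h4

lemma sum_t12 {b : ℝ} (hb0 : 0 < b) {K : ℕ} (hK : 2 ≤ K) :
    ∑ k ∈ Finset.Icc 1 (K - 1), t12 b K k
      = (1/(2*(K:ℝ))) * ∑ k ∈ Finset.Icc 1 (K - 2),
          (beta12 b K ^ (-(k:ℝ)/2) + beta12 b K * beta12 b K ^ ((k:ℝ)/2))
        + (1 / (2 * beta12 b K ^ (((K : ℝ) - 1) / 2)))
          * (b / Real.log b - (b - beta12 b K) / (K * (beta12 b K - 1))) := by
  have hsplit : ∑ k ∈ Finset.Icc 1 (K - 1), t12 b K k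
      = ∑ k ∈ Finset.Icc 1 (K - 2), t12 b K k + t12 b K (K - 1) := by
    have h : K - 1 = (K - 2) + 1 := by omega
    rw [h, Finset.sum_Icc_succ_top (by omega), ← h]
  rw [hsplit]
  congr 1
  · rw [Finset.mul_sum]
    refine Finset.sum_congr rfl fun k hk => ?_
    have hkK : k < K - 1 := by
      have := (Finset.mem_Icc.mp hk).2
      omega
    exact t12_small hb0 (by omega) hkK
  · rw [t12, if_neg (lt_irrefl _)]

lemma part5 {b : ℝ} (hb : 1 < b) :
    Tendsto (fun K : ℕ =>
        beta12 b K * (f12 b (beta12 b K)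
          + ((1 + 2 * beta12 b K) / K - beta12 b K * (1 + 1 / Real.log b))
          + 2 * ∑ k ∈ Finset.Icc 1 (K - 1), t12 b K k))
      atTop (nhds ((Real.sqrt b + 2 * b - 1) / (Real.sqrt b * Real.log b))) := by
  have hb0 : (0:ℝ) < b := lt_trans one_pos hb
  have hlb : 0 < Real.log b := Real.log_pos hb
  have hs0 : (0:ℝ) < Real.sqrt b := Real.sqrt_pos.2 hb0
  have hs2 : Real.sqrt b * Real.sqrt b = b := Real.mul_self_sqrt hb0.le
  have hβ := beta_tendsto (b := b) hb0
  have hlim := hβ.mul (((part4 hb).add (part2 hb)).add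
    (((part1 hb).add (part3 hb)).const_mul 2))
  have hval : 1 * ((1 + 2 / Real.log b + -(1 + 1 / Real.log b))
      + 2 * ((b - 1) / (Real.sqrt b * Real.log b) + 1 / (2 * Real.sqrt b * Real.log b)))
      = (Real.sqrt b + 2 * b - 1) / (Real.sqrt b * Real.log b) := by
    field_simp
    ring
  rw [hval] at hlim
  refine hlim.congr' ?_
  filter_upwards [eventually_ge_atTop 2] with K hK
  rw [sum_t12 hb0 hK]

/-- Limits as `K → ∞`, with `β = b^{1/K}`:
(i) `(1/(2K))·Σ_{k=1}^{K-2} (β^{-k/2} + β·β^{k/2}) → (b-1)/(√b·log b)`;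
(ii) `t_0 = (1+2β)/K − β(1 + 1/log b) → −(1 + 1/log b)`;
(iii) `t_{K-1} → 1/(2√b·log b)`;
and consequently `β·(f(β) + t_0 + 2Σ_{k=1}^{K-1} t_k) → (√b + 2b − 1)/(√b·log b)`,
where `f(β) → 1 + 2/log b`. -/
theorem randomized_ratio_limits (b : ℝ) (hb : 1 < b) :
    Tendsto (fun K : ℕ => (1 / (2 * (K : ℝ))) *
        ∑ k ∈ Finset.Icc 1 (K - 2),
          (beta12 b K ^ (-(k : ℝ) / 2) + beta12 b K * beta12 b K ^ ((k : ℝ) / 2)))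
      atTop (nhds ((b - 1) / (Real.sqrt b * Real.log b))) ∧
    Tendsto (fun K : ℕ =>
        (1 + 2 * beta12 b K) / K - beta12 b K * (1 + 1 / Real.log b))
      atTop (nhds (-(1 + 1 / Real.log b))) ∧
    Tendsto (fun K : ℕ =>
        (1 / (2 * beta12 b K ^ (((K : ℝ) - 1) / 2)))
          * (b / Real.log b - (b - beta12 b K) / (K * (beta12 b K - 1))))
      atTop (nhds (1 / (2 * Real.sqrt b * Real.log b))) ∧
    Tendsto (fun K : ℕ => f12 b (beta12 b K)) atTop (nhds (1 + 2 / Real.log b)) ∧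
    Tendsto (fun K : ℕ =>
        beta12 b K * (f12 b (beta12 b K)
          + ((1 + 2 * beta12 b K) / K - beta12 b K * (1 + 1 / Real.log b))
          + 2 * ∑ k ∈ Finset.Icc 1 (K - 1), t12 b K k))
      atTop (nhds ((Real.sqrt b + 2 * b - 1) / (Real.sqrt b * Real.log b))) := by
  exact ⟨part1 hb, part2 hb, part3 hb, part4 hb, part5 hb⟩
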